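/- Fix N ≥ 1 real numbers u_1, …, u_N, an index i, and p ∈ (0,1]. Let I ⊆ {1,…,N}\{i} be a random subset where each j ≠ i is included independently with probability p, and define f̃ = u_i + ((N−1)/|I|) ∑_{j∈I} u_j if I ≠ ∅ and f̃ = 0 if I = ∅. If additionally P(I = ∅) = (1−p)^N, then E[f̃] = (1 − (1−p)^N) ∑_{j=1}^N u_j. -/

import Mathlib

open Finset

theorem stmt7 (N : ℕ) (hN : 1 ≤ N) (u : Fin N → ℝ) (i : Fin N) (p : ℝ)
    (hp : 0 < p) (hp1 : p ≤ 1)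
    (w : Finset (Fin N) → ℝ) (hw0 : ∀ I, 0 ≤ w I)
    (hsum : ∑ I ∈ (Finset.univ.erase i).powerset, w I = 1)
    (hexch : ∀ I J, I ⊆ Finset.univ.erase i → J ⊆ Finset.univ.erase i →
      I.card = J.card → w I = w J)
    (hempty : w ∅ = (1 - p) ^ N) :
    ∑ I ∈ (Finset.univ.erase i).powerset,
        w I * (if I = ∅ then 0
          else u i + (((N : ℝ) - 1) / I.card) * ∑ j ∈ I, u j)
      = (1 - (1 - p) ^ N) * ∑ j, u j := by
  classical
  set S : Finset (Fin N) := Finset.univ.erase i with hS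
  set P : Finset (Finset (Fin N)) := S.powerset with hP
  have hSc : (S.card : ℝ) = (N : ℝ) - 1 := by
    have : S.card = N - 1 := by
      simp [hS, Finset.card_erase_of_mem]
    rw [this, Nat.cast_sub hN, Nat.cast_one]
  set c : Fin N → ℝ :=
    fun j => ∑ I ∈ P.filter (fun I => j ∈ I), w I * (((N : ℝ) - 1) / I.card) with hc
  have key : ∀ a b : Fin N, a ∈ S → b ∈ S →
      ∀ I ∈ P.filter (fun I => a ∈ I),
        Finset.map (Equiv.swap a b).toEmbedding I ∈ P.filter (fun I => b ∈ I) := by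
    intro a b ha hb I hI
    have hai : a ≠ i := (Finset.mem_erase.mp ha).1
    have hbi : b ≠ i := (Finset.mem_erase.mp hb).1
    rw [Finset.mem_filter, hP, Finset.mem_powerset] at hI
    obtain ⟨hIS, haI⟩ := hI
    rw [Finset.mem_filter, hP, Finset.mem_powerset]
    constructor
    · intro x hx
      rw [Finset.mem_map] at hx
      obtain ⟨y, hy, rfl⟩ := hx
      have hyi : y ≠ i := (Finset.mem_erase.mp (hIS hy)).1
      rw [hS, Finset.mem_erase]
      refine ⟨?_, Finset.mem_univ _⟩
      simp only [Equiv.coe_toEmbedding]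
      intro hcon
      rcases eq_or_ne y a with rfl | h1
      · rw [Equiv.swap_apply_left] at hcon; exact hbi hcon
      rcases eq_or_ne y b with rfl | h2
      · rw [Equiv.swap_apply_right] at hcon; exact hai hcon
      · rw [Equiv.swap_apply_of_ne_of_ne h1 h2] at hcon; exact hyi hcon
    · rw [Finset.mem_map]
      exact ⟨a, haI, by simp⟩
  -- symmetry of c
  have csym : ∀ j ∈ S, ∀ k ∈ S, c j = c k := by
    intro j hj k hk
    refine Finset.sum_nbij' (i := fun I => Finset.map (Equiv.swap j k).toEmbedding I)
      (j := fun I => Finset.map (Equiv.swap k j).toEmbedding I)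
      (key j k hj hk) (key k j hk hj) ?_ ?_ ?_
    · intro I hI
      rw [Equiv.swap_comm]
      ext x
      simp [Equiv.swap_apply_self]
    · intro I hI
      rw [Equiv.swap_comm]
      ext x
      simp [Equiv.swap_apply_self]
    · intro I hI
      have hmem := hI
      rw [Finset.mem_filter, hP, Finset.mem_powerset] at hmem
      have hcard : I.card = (Finset.map (Equiv.swap j k).toEmbedding I).card :=
        (Finset.card_map _).symm
      have hsub : (Finset.map (Equiv.swap j k).toEmbedding I) ⊆ S := by
        have := key j k hj hk I hI
        rw [Finset.mem_filter, hP, Finset.mem_powerset] at this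
        exact this.1
      rw [hexch I _ hmem.1 hsub hcard, ← hcard]
  have hw_nonempty : ∑ I ∈ P.filter (fun I => I ≠ ∅), w I = 1 - w ∅ := by
    have h0 : ∅ ∈ P := by rw [hP, Finset.mem_powerset]; exact Finset.empty_subset _
    rw [eq_sub_iff_add_eq, ← hsum]
    rw [← Finset.sum_filter_add_sum_filter_not P (fun I => I ≠ ∅) w]
    congr 1
    have : P.filter (fun I => ¬ I ≠ ∅) = {∅} := by
      ext J
      simp only [Finset.mem_filter, ne_eq, not_not, Finset.mem_singleton]
      constructor
      · rintro ⟨_, rfl⟩; rfl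
      · rintro rfl; exact ⟨h0, rfl⟩
    rw [this, Finset.sum_singleton]
  -- double sum exchange
  have base : ∀ f : Finset (Fin N) → Fin N → ℝ,
      ∑ I ∈ P, ∑ j ∈ I, f I j = ∑ j ∈ S, ∑ I ∈ P.filter (fun I => j ∈ I), f I j := by
    intro f
    have h1 : ∀ I ∈ P, ∑ j ∈ I, f I j = ∑ j ∈ S, if j ∈ I then f I j else 0 := by
      intro I hI
      rw [Finset.sum_ite_mem, Finset.inter_eq_right.mpr (Finset.mem_powerset.mp hI)]
    rw [Finset.sum_congr rfl h1, Finset.sum_comm]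
    refine Finset.sum_congr rfl fun j _ => ?_
    rw [Finset.sum_filter]
  -- sum of c over S
  have hcsum : ∑ j ∈ S, c j = ((N : ℝ) - 1) * (1 - w ∅) := by
    rw [hc, ← base (fun I _ => w I * (((N : ℝ) - 1) / I.card))]
    have h2 : ∀ I ∈ P, ∑ _j ∈ I, w I * (((N : ℝ) - 1) / I.card)
        = if I ≠ ∅ then ((N : ℝ) - 1) * w I else 0 := by
      intro I _
      rw [Finset.sum_const, nsmul_eq_mul]
      rcases eq_or_ne I ∅ with rfl | hne
      · simp
      · rw [if_pos hne]
        have hc0 : (I.card : ℝ) ≠ 0 := by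
          simp [Finset.card_eq_zero, hne]
        field_simp
    rw [Finset.sum_congr rfl h2, ← Finset.sum_filter, ← Finset.mul_sum, hw_nonempty]
  -- each c j = 1 - w ∅ for j ∈ S
  have hcval : ∀ j ∈ S, c j = 1 - w ∅ := by
    intro j hj
    have hall : ∑ k ∈ S, c k = S.card • c j :=
      by rw [Finset.sum_congr rfl (fun k hk => csym k hk j hj), Finset.sum_const]
    have hcard_pos : (0 : ℝ) < (N : ℝ) - 1 := by
      have : 1 ≤ S.card := Finset.card_pos.mpr ⟨j, hj⟩
      have := hSc ▸ (by exact_mod_cast this : (1 : ℝ) ≤ (S.card : ℝ))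
      linarith
    have : ((N : ℝ) - 1) * c j = ((N : ℝ) - 1) * (1 - w ∅) := by
      rw [← hcsum, hall, nsmul_eq_mul, hSc]
    exact mul_left_cancel₀ (ne_of_gt hcard_pos) this
  -- split the main sum
  have hsplit : ∀ I ∈ P,
      w I * (if I = ∅ then 0 else u i + (((N : ℝ) - 1) / I.card) * ∑ j ∈ I, u j)
      = (if I ≠ ∅ then w I * u i else 0)
        + ∑ j ∈ I, (w I * (((N : ℝ) - 1) / I.card)) * u j := by
    intro I _
    rcases eq_or_ne I ∅ with rfl | hne
    · simp
    · rw [if_neg hne, if_pos hne, ← Finset.mul_sum]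
      ring
  rw [Finset.sum_congr rfl hsplit, Finset.sum_add_distrib]
  have hA : ∑ I ∈ P, (if I ≠ ∅ then w I * u i else 0) = (1 - w ∅) * u i := by
    rw [← Finset.sum_filter, ← Finset.sum_mul, hw_nonempty]
  have hB : ∑ I ∈ P, ∑ j ∈ I, (w I * (((N : ℝ) - 1) / I.card)) * u j
      = (1 - w ∅) * ∑ j ∈ S, u j := by
    rw [base, Finset.mul_sum]
    refine Finset.sum_congr rfl fun j hj => ?_
    rw [← Finset.sum_mul,
      show (∑ I ∈ P.filter (fun I => j ∈ I), w I * (((N : ℝ) - 1) / I.card)) = c j from rfl,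
      hcval j hj, mul_comm]
  rw [hA, hB, ← hempty]
  have : ∑ j, u j = u i + ∑ j ∈ S, u j := by
    rw [hS, ← Finset.add_sum_erase _ _ (Finset.mem_univ i)]
  rw [this]
  ring
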